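/- Let C(q,l) ⊆ Prod(C(S_q),l) consist of tuples (α(g₁),…,α(g_l)) with |{i : g_i ∈ A_q}| even. Then Γ₁(C(q,l)) = Γ₁(Prod(C(S_q),l)). -/

import Mathlib

/-- The Hamming distance in `H(lq,q)`, viewing vertices as `l`-tuples of vertices of
`H(q,q)`: the sum of the blockwise Hamming distances. -/
def prodDist {l m q : ℕ} (u v : Fin l → Fin m → Fin q) : ℕ :=
  ∑ i, hammingDist (u i) (v i)

/-- The set of neighbours of a code in `H(lq,q)`. -/
def prodNbrs {l m q : ℕ} (D : Set (Fin l → Fin m → Fin q)) : Set (Fin l → Fin m → Fin q) :=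
  {v | v ∉ D ∧ ∃ u ∈ D, prodDist v u = 1}

/-- The product code `Prod(C(S_q), l)` in `H(lq,q)`: tuples whose blocks are all
permutation codewords. -/
def prodSq (q l : ℕ) : Set (Fin l → Fin q → Fin q) :=
  {u | ∀ i, ∃ g : Equiv.Perm (Fin q), u i = fun k => g k}

/-- The code `C(q,l)`: tuples `(α(g₁),…,α(g_l))` with an even number of the `g_i` even (i.e. of sign 1, lying in `A_q`). -/
def cql (q l : ℕ) : Set (Fin l → Fin q → Fin q) :=
  {u | ∃ g : Fin l → Equiv.Perm (Fin q), (∀ i, u i = fun k => g i k) ∧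
    Even (Finset.univ.filter fun i => Equiv.Perm.sign (g i) = 1).card}

lemma perm_dist_ne_one {q : ℕ} (g h : Equiv.Perm (Fin q)) :
    hammingDist (fun k => h k) (fun k => g k) ≠ 1 := by
  intro hd
  rw [hammingDist] at hd
  obtain ⟨k0, hk0⟩ := Finset.card_eq_one.mp hd
  have hmem : ∀ k, h k ≠ g k → k = k0 := by
    intro k hne
    have : k ∈ Finset.univ.filter fun k => h k ≠ g k := by simp [hne]
    rw [hk0] at this; simpa using this
  have hk0ne : h k0 ≠ g k0 := by
    have : k0 ∈ Finset.univ.filter fun k => h k ≠ g k := by rw [hk0]; simp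
    simpa using this
  have hsum : ∑ k, ((h k : ℕ)) = ∑ k, ((g k : ℕ)) := by
    rw [Equiv.sum_comp h (fun j : Fin q => (j : ℕ)),
        Equiv.sum_comp g (fun j : Fin q => (j : ℕ))]
  have h1 : ((h k0 : ℕ)) + ∑ k ∈ Finset.univ.erase k0, ((h k : ℕ)) = ∑ k, ((h k : ℕ)) :=
    Finset.add_sum_erase _ (fun k => ((h k : ℕ))) (Finset.mem_univ k0)
  have h2 : ((g k0 : ℕ)) + ∑ k ∈ Finset.univ.erase k0, ((g k : ℕ)) = ∑ k, ((g k : ℕ)) :=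
    Finset.add_sum_erase _ (fun k => ((g k : ℕ))) (Finset.mem_univ k0)
  have h3 : ∑ k ∈ Finset.univ.erase k0, ((h k : ℕ)) = ∑ k ∈ Finset.univ.erase k0, ((g k : ℕ)) := by
    apply Finset.sum_congr rfl
    intro k hk
    have hne : k ≠ k0 := (Finset.mem_erase.mp hk).1
    by_contra hc
    exact hne (hmem k (fun h' => hc (by rw [h'])))
  have : ((h k0 : ℕ)) = (g k0 : ℕ) := by omega
  exact hk0ne (Fin.ext this)
lemma dist_one_block {l m q : ℕ} (v u : Fin l → Fin m → Fin q)
    (h : prodDist v u = 1) :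
    ∃ i0, hammingDist (v i0) (u i0) = 1 ∧ ∀ i, i ≠ i0 → v i = u i := by
  rw [prodDist] at h
  have hne : ∃ i, hammingDist (v i) (u i) ≠ 0 := by
    by_contra hc
    push_neg at hc
    rw [Finset.sum_eq_zero (fun i _ => hc i)] at h
    omega
  obtain ⟨i0, hi0⟩ := hne
  have hle : hammingDist (v i0) (u i0) ≤ 1 := h ▸
    Finset.single_le_sum (f := fun i => hammingDist (v i) (u i)) (fun i _ => Nat.zero_le _)
      (Finset.mem_univ i0)
  have h1 : hammingDist (v i0) (u i0) = 1 := by omega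
  refine ⟨i0, h1, ?_⟩
  have h2 : hammingDist (v i0) (u i0) +
      ∑ i ∈ Finset.univ.erase i0, hammingDist (v i) (u i) = 1 := by
    rw [Finset.add_sum_erase _ (fun i => hammingDist (v i) (u i)) (Finset.mem_univ i0)]
    exact h
  have h3 : ∀ i ∈ Finset.univ.erase i0, hammingDist (v i) (u i) = 0 := by
    rw [← Finset.sum_eq_zero_iff]
    omega
  intro i hi
  exact hammingDist_eq_zero.mp (h3 i (Finset.mem_erase.mpr ⟨hi, Finset.mem_univ i⟩))

lemma cql_subset (q l : ℕ) : cql q l ⊆ prodSq q l := by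
  rintro u ⟨g, hg, _⟩ i
  exact ⟨g i, hg i⟩

lemma prodSq_dist_ne_one {q l : ℕ} (v u : Fin l → Fin q → Fin q)
    (hv : v ∈ prodSq q l) (hu : u ∈ prodSq q l) : prodDist v u ≠ 1 := by
  intro h
  obtain ⟨i0, h1, -⟩ := dist_one_block v u h
  obtain ⟨gv, hgv⟩ := hv i0
  obtain ⟨gu, hgu⟩ := hu i0
  rw [hgv, hgu] at h1
  exact perm_dist_ne_one gu gv h1

lemma swapDistLemma {q : ℕ} (g : Equiv.Perm (Fin q)) (w : Fin q → Fin q)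
    (hd : hammingDist w (fun k => g k) = 1) :
    ∃ g' : Equiv.Perm (Fin q), hammingDist w (fun k => g' k) = 1 ∧
      Equiv.Perm.sign g' = - Equiv.Perm.sign g := by
  rw [hammingDist] at hd
  obtain ⟨k0, hk0⟩ := Finset.card_eq_one.mp hd
  have hmem : ∀ k, w k ≠ g k ↔ k = k0 := by
    intro k
    constructor
    · intro hne
      have : k ∈ Finset.univ.filter fun k => w k ≠ g k := by simp [hne]
      rw [hk0] at this; simpa using this
    · rintro rfl
      have : k ∈ ({k} : Finset _) := Finset.mem_singleton_self _
      rw [← hk0] at this; simpa using this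
  set a := g k0 with ha
  set c := w k0 with hc
  have hac : a ≠ c := fun h => ((hmem k0).mpr rfl) h.symm
  refine ⟨Equiv.swap a c * g, ?_, ?_⟩
  · rw [hammingDist]
    rw [Finset.card_eq_one]
    refine ⟨g⁻¹ c, ?_⟩
    ext k
    simp only [Finset.mem_filter, Finset.mem_univ, true_and, Finset.mem_singleton]
    simp only [Equiv.Perm.mul_apply]
    constructor
    · intro hne
      by_cases hk : k = k0
      · subst hk
        rw [← ha, Equiv.swap_apply_left] at hne
        exact absurd hc.symm hne
      · have hwk : w k = g k := not_not.mp (fun h => hk ((hmem k).mp h))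
        rw [hwk] at hne
        by_cases hgc : g k = c
        · rw [← hgc, (Equiv.Perm.inv_eq_iff_eq (f := g) (x := g k) (y := k)).mpr rfl]
        · have hga : g k ≠ a := fun h => hk (g.injective (h.trans ha))
          rw [Equiv.swap_apply_of_ne_of_ne hga hgc] at hne
          exact absurd rfl hne
    · rintro rfl
      rw [((Equiv.Perm.inv_eq_iff_eq (f := g) (x := c)).mp rfl).symm, Equiv.swap_apply_right]
      have hk : g⁻¹ c ≠ k0 := fun h => hac (by rw [ha, ← h, ((Equiv.Perm.inv_eq_iff_eq (f := g) (x := c)).mp rfl).symm])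
      have hwk : w (g⁻¹ c) = g (g⁻¹ c) := not_not.mp (fun h => hk ((hmem _).mp h))
      rw [hwk, ((Equiv.Perm.inv_eq_iff_eq (f := g) (x := c)).mp rfl).symm]
      exact fun h => hac h.symm
  · rw [Equiv.Perm.sign_mul, Equiv.Perm.sign_swap hac, neg_one_mul]

/-- `Γ₁(C(q,l)) = Γ₁(Prod(C(S_q),l))`. -/
theorem stmt16 (q l : ℕ) (hq : 2 ≤ q) (hl : 1 ≤ l) :
    prodNbrs (cql q l) = prodNbrs (prodSq q l) := by
  ext v
  constructor
  · rintro ⟨hv, u, hu, hd⟩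
    have huS := cql_subset q l hu
    have hvS : v ∉ prodSq q l := fun hvS => prodSq_dist_ne_one v u hvS huS hd
    exact ⟨hvS, u, huS, hd⟩
  · rintro ⟨hv, u, hu, hd⟩
    have hvC : v ∉ cql q l := fun h => hv (cql_subset q l h)
    choose g hg using hu
    by_cases hpar : Even (Finset.univ.filter fun i => Equiv.Perm.sign (g i) = 1).card
    · exact ⟨hvC, u, ⟨g, hg, hpar⟩, hd⟩
    · obtain ⟨i0, h1, h0⟩ := dist_one_block v u hd
      rw [hg i0] at h1
      obtain ⟨g', hg'1, hg'sign⟩ := swapDistLemma (g i0) (v i0) h1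
      set g2 := Function.update g i0 g' with hg2
      refine ⟨hvC, fun i k => g2 i k, ⟨g2, fun i => rfl, ?_⟩, ?_⟩
      · set S := Finset.univ.filter fun i => Equiv.Perm.sign (g i) = 1 with hS
        have hagree : ∀ i, i ≠ i0 → g2 i = g i := fun i hi => Function.update_of_ne hi _ _
        rcases Int.units_eq_one_or (Equiv.Perm.sign (g i0)) with hs | hs
        · have hp2 : ¬ (Equiv.Perm.sign (g2 i0) = 1) := by
            rw [hg2, Function.update_self, hg'sign, hs]
            decide
          have hfe : (Finset.univ.filter fun i => Equiv.Perm.sign (g2 i) = 1) = S.erase i0 := by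
            ext i
            simp only [Finset.mem_filter, Finset.mem_univ, true_and, Finset.mem_erase, hS]
            by_cases hi : i = i0
            · subst hi; simp [hp2]
            · rw [hagree i hi]; simp [hi]
          have hiS : i0 ∈ S := by rw [hS]; simp [hs]
          rw [hfe, Finset.card_erase_of_mem hiS]
          have hc1 : 1 ≤ S.card := Finset.card_pos.mpr ⟨i0, hiS⟩
          rcases Nat.even_or_odd S.card with he | ho
          · exact absurd he hpar
          · obtain ⟨m, hm⟩ := ho; exact ⟨m, by omega⟩
        · have hp2 : Equiv.Perm.sign (g2 i0) = 1 := by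
            rw [hg2, Function.update_self, hg'sign, hs]
            decide
          have hfe : (Finset.univ.filter fun i => Equiv.Perm.sign (g2 i) = 1) = insert i0 S := by
            ext i
            simp only [Finset.mem_filter, Finset.mem_univ, true_and, Finset.mem_insert, hS]
            by_cases hi : i = i0
            · subst hi; simp [hp2]
            · rw [hagree i hi]; simp [hi]
          have hiS : i0 ∉ S := by rw [hS]; simp [hs]
          rw [hfe, Finset.card_insert_of_notMem hiS]
          rcases Nat.even_or_odd S.card with he | ho
          · exact absurd he hpar
          · exact ho.add_one
      · rw [prodDist]
        rw [← Finset.add_sum_erase _ (fun i => hammingDist (v i) fun k => g2 i k)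
          (Finset.mem_univ i0)]
        have hz : ∑ i ∈ Finset.univ.erase i0, (hammingDist (v i) fun k => g2 i k) = 0 := by
          apply Finset.sum_eq_zero
          intro i hi
          have hne : i ≠ i0 := (Finset.mem_erase.mp hi).1
          rw [hg2, Function.update_of_ne hne]
          rw [hammingDist_eq_zero, h0 i hne, hg i]
        rw [hz, hg2, Function.update_self, hg'1]
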